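/- Let W be a convex body in the plane ℝ² and let p ∈ ℝ². If for every unit vector u, the orthogonal projection of p onto the line u^⊥ is the midpoint of the orthogonal projection of W onto u^⊥, then W is centrally symmetric with centre p. -/

import Mathlib

open Metric Set Filter

/-- Rotation by π about the line through `a` with (unit) direction `u`
(in the plane, this is the reflection across that line). -/
noncomputable def lineRefl {d : ℕ} (a u x : EuclideanSpace ℝ (Fin d)) :
    EuclideanSpace ℝ (Fin d) :=
  (2:ℝ) • a - x + ((2:ℝ) * (inner ℝ (x - a) u : ℝ)) • u

/-- A convex body: compact, convex, nonempty interior. -/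
def IsConvexBody {d : ℕ} (K : Set (EuclideanSpace ℝ (Fin d))) : Prop :=
  IsCompact K ∧ Convex ℝ K ∧ (interior K).Nonempty

/-- Central symmetry with centre `o`. -/
def CentSym {d : ℕ} (K : Set (EuclideanSpace ℝ (Fin d)))
    (o : EuclideanSpace ℝ (Fin d)) : Prop :=
  ∀ x, x ∈ K ↔ (2:ℝ) • o - x ∈ K

/-- The line through `a` with direction `u` is an axis of symmetry of `K`. -/
def IsAxisOfSym {d : ℕ} (K : Set (EuclideanSpace ℝ (Fin d)))
    (a u : EuclideanSpace ℝ (Fin d)) : Prop :=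
  lineRefl a u '' K = K

/-- `K` is a body of revolution with axis the line through `a` with direction `u`:
every isometry fixing the axis pointwise maps `K` onto itself. -/
def IsRevBody {d : ℕ} (K : Set (EuclideanSpace ℝ (Fin d)))
    (a u : EuclideanSpace ℝ (Fin d)) : Prop :=
  ∀ f : EuclideanSpace ℝ (Fin d) ≃ᵢ EuclideanSpace ℝ (Fin d),
    (∀ t : ℝ, f (a + t • u) = a + t • u) → f '' K = K

/-- Orthogonal projection onto the hyperplane `u^⊥` (for `u` a unit vector). -/
noncomputable def projHyp {d : ℕ} (u x : EuclideanSpace ℝ (Fin d)) :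
    EuclideanSpace ℝ (Fin d) :=
  x - (inner ℝ x u : ℝ) • u

/-- If for every unit vector `u` the projection of `p` onto `u^⊥`
is the midpoint of the projection of the planar convex body `W` onto `u^⊥`,
then `W` is centrally symmetric with centre `p`. -/
theorem stmt_0 (W : Set (EuclideanSpace ℝ (Fin 2))) (p : EuclideanSpace ℝ (Fin 2))
    (hW : IsConvexBody W)
    (hmid : ∀ u : EuclideanSpace ℝ (Fin 2), ‖u‖ = 1 →
      ∀ x ∈ W, (2:ℝ) • projHyp u p - projHyp u x ∈ projHyp u '' W) :
    CentSym W p := by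
  obtain ⟨hcomp, hconv, hint⟩ := hW
  have key : ∀ x ∈ W, (2:ℝ) • p - x ∈ W := by
    intro x hx
    by_contra hq
    -- separate q := 2•p - x from W
    obtain ⟨f, c, hfW, hfq⟩ :=
      geometric_hahn_banach_closed_point hconv hcomp.isClosed hq
    -- f is nonzero
    have hfne : (f : EuclideanSpace ℝ (Fin 2) →ₗ[ℝ] ℝ) ≠ 0 := by
      intro h0
      have h1 : f x < c := hfW x hx
      have h2 : f x = 0 := by
        have := LinearMap.congr_fun h0 x
        simpa using this
      have h3 : f ((2:ℝ) • p - x) = 0 := by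
        have := LinearMap.congr_fun h0 ((2:ℝ) • p - x)
        simpa using this
      rw [h2] at h1; rw [h3] at hfq; linarith
    -- kernel of f is nontrivial
    have hker : LinearMap.ker (f : EuclideanSpace ℝ (Fin 2) →ₗ[ℝ] ℝ) ≠ ⊥ := by
      intro hbot
      have hinj : Function.Injective (f : EuclideanSpace ℝ (Fin 2) →ₗ[ℝ] ℝ) :=
        LinearMap.ker_eq_bot.mp hbot
      have h2 : Module.finrank ℝ (EuclideanSpace ℝ (Fin 2)) ≤ Module.finrank ℝ ℝ :=
        LinearMap.finrank_le_finrank_of_injective hinj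
      simp [finrank_euclideanSpace] at h2
    obtain ⟨u0, hu0mem, hu0ne⟩ := Submodule.exists_mem_ne_zero_of_ne_bot hker
    set u : EuclideanSpace ℝ (Fin 2) := ‖u0‖⁻¹ • u0 with hu
    have hnorm : ‖u‖ = 1 := norm_smul_inv_norm hu0ne
    have hfu : f u = 0 := by
      have h0 : f u0 = 0 := hu0mem
      simp [hu, h0]
    obtain ⟨w, hwW, hw⟩ := hmid u hnorm x hx
    -- apply f to both sides
    have hfw : f w = f ((2:ℝ) • p - x) := by
      have h := congrArg f hw
      simp only [projHyp, map_sub, map_smul, smul_eq_mul, hfu, mul_zero,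
        sub_zero] at h ⊢
      linarith [h]
    have := hfW w hwW
    rw [hfw] at this
    linarith
  intro x
  constructor
  · exact key x
  · intro h
    have := key _ h
    have hx2 : (2:ℝ) • p - ((2:ℝ) • p - x) = x := by abel
    rwa [hx2] at this
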